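/- For real v > -1/2 and z ∈ ℝ, the Bessel function of the first kind satisfies the Poisson integral representation Γ(1/2 + v) J_v(z) = 2 π^{-1/2} (z/2)^v ∫₀^{π/2} cos(z cos t) (sin t)^{2v} dt. -/

import Mathlib

noncomputable section


open Real Set MeasureTheory

lemma gammaHalf (m : ℕ) : Real.Gamma ((m:ℝ) + 1/2) =
    (2*m).factorial * Real.sqrt Real.pi / (4^m * m.factorial) := by
  induction m with
  | zero => norm_num [Real.Gamma_one_half_eq]
  | succ m ih =>
    have hne : (m:ℝ) + 1/2 ≠ 0 := by positivity
    have : ((m:ℝ)+1) + 1/2 = ((m:ℝ) + 1/2) + 1 := by ring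
    rw [Nat.cast_succ, this, Real.Gamma_add_one hne, ih]
    have h2 : 2*(m+1) = (2*m+1) + 1 := by ring
    rw [h2, Nat.factorial_succ, Nat.factorial_succ, Nat.factorial_succ]
    have h4 : (4:ℝ)^(m+1) = 4 * 4^m := by ring
    push_cast [h4]
    have hm : (m.factorial : ℝ) ≠ 0 := by positivity
    have hp : (4:ℝ)^m ≠ 0 := by positivity
    field_simp
    ring


lemma rpow_split (x : ℝ) (m : ℕ) {v : ℝ} (hv : -(1/2:ℝ) < v) :
    x ^ (2*(m:ℝ) + v) = x^(2*m) * x ^ v := by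
  rcases lt_trichotomy x 0 with hx | hx | hx
  · rw [Real.rpow_def_of_neg hx, Real.rpow_def_of_neg hx]
    have hc : Real.cos ((2*(m:ℝ) + v) * π) = Real.cos (v * π) := by
      have : (2*(m:ℝ) + v) * π = v * π + (m : ℤ) * (2 * π) := by push_cast; ring
      rw [this, Real.cos_add_int_mul_two_pi]
    rw [hc, mul_add, Real.exp_add]
    have hxp : x ^ (2*m) = Real.exp (Real.log x * (2*(m:ℝ))) := by
      have h1 : x ^ (2*m) = |x| ^ (2*m) := ((even_two_mul m).pow_abs x).symm
      have h2 : |x| ^ (2*m) = |x| ^ ((2*m : ℕ) : ℝ) := (Real.rpow_natCast _ _).symm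
      rw [h1, h2, Real.rpow_def_of_pos (abs_pos.mpr hx.ne), Real.log_abs]
      push_cast; ring_nf
    rw [hxp]; ring
  · subst hx
    rcases Nat.eq_zero_or_pos m with hm | hm
    · subst hm; simp
    · have hpos : (0:ℝ) < 2*(m:ℝ) + v := by
        have : (1:ℝ) ≤ (m:ℝ) := by exact_mod_cast hm
        linarith
      rw [Real.zero_rpow hpos.ne', zero_pow (by omega : 2*m ≠ 0), zero_mul]
  · rw [Real.rpow_add hx]
    congr 1
    have h2 : (2*(m:ℝ)) = ((2*m : ℕ):ℝ) := by push_cast; ring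
    rw [h2, Real.rpow_natCast]


lemma beta_ofReal {a b : ℝ} (ha : 0 < a) (hb : 0 < b) :
    Complex.betaIntegral a b
      = ((∫ x in (0:ℝ)..1, x ^ (a-1) * (1-x) ^ (b-1) : ℝ) : ℂ) := by
  rw [Complex.betaIntegral, ← intervalIntegral.integral_ofReal]
  refine intervalIntegral.integral_congr fun x hx => ?_
  rw [Set.uIcc_of_le (by norm_num : (0:ℝ) ≤ 1)] at hx
  have hx0 : (0:ℝ) ≤ x := hx.1
  have hx1 : (0:ℝ) ≤ 1 - x := by linarith [hx.2]
  rw [show ((a:ℂ) - 1) = ((a - 1 : ℝ) : ℂ) by push_cast; ring,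
      show ((b:ℂ) - 1) = ((b - 1 : ℝ) : ℂ) by push_cast; ring,
      show (1 - (x:ℂ)) = ((1 - x : ℝ):ℂ) by push_cast; ring,
      ← Complex.ofReal_cpow hx0, ← Complex.ofReal_cpow hx1, ← Complex.ofReal_mul]

lemma betaReal {a b : ℝ} (ha : 0 < a) (hb : 0 < b) :
    ∫ x in (0:ℝ)..1, x ^ (a-1) * (1-x) ^ (b-1)
      = Real.Gamma a * Real.Gamma b / Real.Gamma (a+b) := by
  have h := Complex.Gamma_mul_Gamma_eq_betaIntegral
    (by simpa using ha : 0 < (a:ℂ).re) (by simpa using hb : 0 < (b:ℂ).re)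
  rw [beta_ofReal ha hb] at h
  have hab : Real.Gamma (a+b) ≠ 0 := (Real.Gamma_pos_of_pos (by linarith)).ne'
  have h2 : ((Real.Gamma a * Real.Gamma b : ℝ) : ℂ)
      = ((Real.Gamma (a+b) * ∫ x in (0:ℝ)..1, x ^ (a-1) * (1-x) ^ (b-1) : ℝ) : ℂ) := by
    push_cast
    rw [← Complex.Gamma_ofReal, ← Complex.Gamma_ofReal, ← Complex.Gamma_ofReal] at *
    push_cast at h
    convert h using 2
    push_cast
    ring
  have h3 := Complex.ofReal_injective h2
  field_simp
  linarith [h3]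

lemma betaIntegrable {a b : ℝ} (ha : 0 < a) (hb : 0 < b) :
    IntegrableOn (fun x : ℝ => x ^ (a-1) * (1-x) ^ (b-1)) (Set.Ioo 0 1) := by
  have hc := Complex.betaIntegral_convergent
    (by simpa using ha : 0 < (a:ℂ).re) (by simpa using hb : 0 < (b:ℂ).re)
  rw [intervalIntegrable_iff_integrableOn_Ioc_of_le (by norm_num : (0:ℝ) ≤ 1)] at hc
  have hre : IntegrableOn
      (fun x : ℝ => ((x:ℂ) ^ ((a:ℂ) - 1) * (1 - (x:ℂ)) ^ ((b:ℂ) - 1)).re) (Set.Ioc 0 1) :=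
    hc.re
  refine (hre.congr_fun (fun x hx => ?_) measurableSet_Ioc).mono_set Set.Ioo_subset_Ioc_self
  have hx0 : (0:ℝ) ≤ x := hx.1.le
  have hx1 : (0:ℝ) ≤ 1 - x := by linarith [hx.2]
  rw [show ((a:ℂ) - 1) = ((a - 1 : ℝ) : ℂ) by push_cast; ring,
      show ((b:ℂ) - 1) = ((b - 1 : ℝ) : ℂ) by push_cast; ring,
      ← Complex.ofReal_cpow hx0, show (1 - (x:ℂ)) = ((1 - x : ℝ):ℂ) by push_cast; ring,
      ← Complex.ofReal_cpow hx1, ← Complex.ofReal_mul, Complex.ofReal_re]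


lemma sin_mem_Ioo {t : ℝ} (ht : t ∈ Set.Ioo 0 (π/2)) :
    0 < Real.sin t ∧ Real.sin t < 1 ∧ 0 < Real.cos t := by
  obtain ⟨h0, h1⟩ := ht
  have hpi := Real.pi_pos
  refine ⟨Real.sin_pos_of_pos_of_lt_pi h0 (by linarith), ?_,
    Real.cos_pos_of_mem_Ioo ⟨by linarith, h1⟩⟩
  have := Real.strictMonoOn_sin (a := t) (b := π/2)
    ⟨by linarith, by linarith⟩ ⟨by linarith, le_refl _⟩ h1
  simpa using this

lemma sinSq_image :
    (fun t => Real.sin t ^ 2) '' Set.Ioo 0 (π/2) = Set.Ioo 0 1 := by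
  ext y
  constructor
  · rintro ⟨t, ht, rfl⟩
    obtain ⟨h1, h2, _⟩ := sin_mem_Ioo ht
    exact ⟨by positivity, by simp only; nlinarith⟩
  · rintro ⟨hy0, hy1⟩
    have hs0 : 0 < Real.sqrt y := Real.sqrt_pos.mpr hy0
    have hs1 : Real.sqrt y < 1 := by
      rw [show (1:ℝ) = Real.sqrt 1 by simp]
      exact Real.sqrt_lt_sqrt hy0.le hy1
    refine ⟨Real.arcsin (Real.sqrt y), ⟨Real.arcsin_pos.mpr hs0, ?_⟩, ?_⟩
    · exact Real.arcsin_lt_pi_div_two.mpr hs1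
    · simp only
      rw [Real.sin_arcsin (by linarith) (by linarith), Real.sq_sqrt hy0.le]

lemma sinSq_inj : Set.InjOn (fun t => Real.sin t ^ 2) (Set.Ioo 0 (π/2)) := by
  intro s hs t ht h
  obtain ⟨hs1, _, _⟩ := sin_mem_Ioo hs
  obtain ⟨ht1, _, _⟩ := sin_mem_Ioo ht
  simp only at h
  have hsin : Real.sin s = Real.sin t := by nlinarith
  have hpi := Real.pi_pos
  exact Real.strictMonoOn_sin.injOn
    ⟨by linarith [hs.1, hs.2], (hs.2).le⟩ ⟨by linarith [ht.1, ht.2], (ht.2).le⟩ hsin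


lemma ptwise {v : ℝ} (m : ℕ) {t : ℝ} (ht : t ∈ Set.Ioo 0 (π/2)) :
    |2 * Real.sin t * Real.cos t| •
      ((Real.sin t^2) ^ (v - 1/2) * (1 - Real.sin t^2) ^ ((m:ℝ) - 1/2))
      = 2 * (Real.cos t^(2*m) * Real.sin t ^ (2*v)) := by
  obtain ⟨hs, _, hc⟩ := sin_mem_Ioo ht
  rw [smul_eq_mul, abs_of_pos (by positivity)]
  rw [show (1 - Real.sin t^2) = Real.cos t^2 from (Real.cos_sq' t).symm]
  rw [show (Real.sin t^2 : ℝ) = Real.sin t ^ ((2:ℕ):ℝ) from (Real.rpow_natCast _ 2).symm,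
      show (Real.cos t^2 : ℝ) = Real.cos t ^ ((2:ℕ):ℝ) from (Real.rpow_natCast _ 2).symm]
  rw [← Real.rpow_mul hs.le, ← Real.rpow_mul hc.le]
  have e1 : ((2:ℕ):ℝ) * (v - 1/2) = 2*v - 1 := by push_cast; ring
  have e2 : ((2:ℕ):ℝ) * ((m:ℝ) - 1/2) = 2*(m:ℝ) - 1 := by push_cast; ring
  rw [e1, e2]
  have h3 : Real.sin t * Real.sin t ^ (2*v - 1) = Real.sin t ^ (2*v) := by
    nth_rewrite 1 [← Real.rpow_one (Real.sin t)]
    rw [← Real.rpow_add hs]; norm_num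
  have h4 : Real.cos t * Real.cos t ^ (2*(m:ℝ) - 1) = Real.cos t ^ (2*m) := by
    nth_rewrite 1 [← Real.rpow_one (Real.cos t)]
    rw [← Real.rpow_add hc, show (1 + (2*(m:ℝ)-1)) = ((2*m:ℕ):ℝ) by push_cast; ring,
        Real.rpow_natCast]
  rw [← h3, ← h4]; ring

lemma key_int {v : ℝ} (hv : -(1/2:ℝ) < v) (m : ℕ) :
    IntegrableOn (fun t => Real.cos t^(2*m) * Real.sin t ^ (2*v)) (Set.Ioo 0 (π/2)) ∧
    ∫ t in Set.Ioo 0 (π/2), Real.cos t^(2*m) * Real.sin t ^ (2*v)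
      = Real.Gamma (v+1/2) * Real.Gamma ((m:ℝ)+1/2) / (2 * Real.Gamma (v + (m:ℝ) + 1)) := by
  have ha : (0:ℝ) < v + 1/2 := by linarith
  have hb : (0:ℝ) < (m:ℝ) + 1/2 := by positivity
  set g : ℝ → ℝ := fun x => x ^ (v - 1/2) * (1-x) ^ ((m:ℝ) - 1/2) with hg
  have hgeq : (fun x : ℝ => x ^ (v + 1/2 - 1) * (1-x) ^ ((m:ℝ) + 1/2 - 1)) = g := by
    funext x; rw [hg, show v + 1/2 - 1 = v - 1/2 by ring, show (m:ℝ) + 1/2 - 1 = (m:ℝ) - 1/2 by ring]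
  have hderiv : ∀ x ∈ Set.Ioo 0 (π/2), HasDerivWithinAt (fun t => Real.sin t ^ 2)
      (2 * Real.sin x * Real.cos x) (Set.Ioo 0 (π/2)) x := by
    intro x _
    have h := (Real.hasDerivAt_sin x).pow 2
    have h2 := h.hasDerivWithinAt (s := Set.Ioo 0 (π/2))
    exact h2.congr_deriv (by norm_num)
  have hgi : IntegrableOn g (Set.Ioo 0 1) := hgeq ▸ betaIntegrable ha hb
  have hint : IntegrableOn
      (fun x => |2 * Real.sin x * Real.cos x| • g (Real.sin x ^ 2)) (Set.Ioo 0 (π/2)) := by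
    have := (integrableOn_image_iff_integrableOn_abs_deriv_smul measurableSet_Ioo
      hderiv sinSq_inj g)
    rw [sinSq_image] at this
    exact this.mp hgi
  have hint2 : IntegrableOn (fun t => 2 * (Real.cos t^(2*m) * Real.sin t ^ (2*v)))
      (Set.Ioo 0 (π/2)) :=
    hint.congr_fun (fun t ht => ptwise m ht) measurableSet_Ioo
  constructor
  · exact MeasureTheory.IntegrableOn.congr_fun (hint2.const_mul (1/2)) (fun t ht => by ring) measurableSet_Ioo
  · have himg := integral_image_eq_integral_abs_deriv_smul measurableSet_Ioo hderiv sinSq_inj g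
    rw [sinSq_image] at himg
    have hL : ∫ x in Set.Ioo (0:ℝ) 1, g x
        = Real.Gamma (v+1/2) * Real.Gamma ((m:ℝ)+1/2) / Real.Gamma (v + (m:ℝ) + 1) := by
      rw [← integral_Ioc_eq_integral_Ioo,
        ← intervalIntegral.integral_of_le (by norm_num : (0:ℝ) ≤ 1), ← hgeq,
        betaReal ha hb, show v + 1/2 + ((m:ℝ) + 1/2) = v + (m:ℝ) + 1 by ring]
    have hR : ∫ x in Set.Ioo 0 (π/2), |2 * Real.sin x * Real.cos x| • g (Real.sin x ^ 2)
        = 2 * ∫ t in Set.Ioo 0 (π/2), Real.cos t^(2*m) * Real.sin t ^ (2*v) := by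
      rw [setIntegral_congr_fun measurableSet_Ioo (fun t ht => ptwise m ht)]
      exact integral_const_mul 2 _
    rw [hL, hR] at himg
    rw [show Real.Gamma (v+1/2) * Real.Gamma ((m:ℝ)+1/2) / (2 * Real.Gamma (v + (m:ℝ) + 1))
      = (Real.Gamma (v+1/2) * Real.Gamma ((m:ℝ)+1/2) / Real.Gamma (v + (m:ℝ) + 1)) / 2 by
        rw [div_div]; ring]
    linarith



/-- The Bessel function of the first kind of order `v`, defined by its power series
`J_v(z) = Σ_{m≥0} (-1)^m / (m! Γ(m+v+1)) (z/2)^{2m+v}` (with real powers). -/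
def besselJ (v z : ℝ) : ℝ :=
  ∑' m : ℕ, (-1 : ℝ) ^ m / (m.factorial * Real.Gamma ((m : ℝ) + v + 1)) *
    (z / 2) ^ (2 * (m : ℝ) + v)

/-- Poisson integral representation of the Bessel function: for real `v > -1/2` and `z ∈ ℝ`,
`Γ(1/2 + v) J_v(z) = 2 π^{-1/2} (z/2)^v ∫₀^{π/2} cos(z cos t) (sin t)^{2v} dt`. -/
theorem besselJ_poisson_integral (v z : ℝ) (hv : -(1/2 : ℝ) < v) :
    Real.Gamma (1/2 + v) * besselJ v z
      = 2 * Real.pi ^ (-(1/2 : ℝ)) * (z / 2) ^ v *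
        ∫ t in (0:ℝ)..(Real.pi / 2), Real.cos (z * Real.cos t) * Real.sin t ^ (2 * v) := by
  have hpi := Real.pi_pos
  rw [intervalIntegral.integral_of_le (by linarith : (0:ℝ) ≤ π/2),
      integral_Ioc_eq_integral_Ioo]
  set c : ℕ → ℝ := fun m => (-1:ℝ)^m * z^(2*m) / (2*m).factorial with hc
  set F : ℕ → ℝ → ℝ := fun m t =>
    (-1:ℝ)^m * (z * Real.cos t)^(2*m) / (2*m).factorial * Real.sin t ^ (2*v) with hF
  have hFeq : ∀ m, F m = fun t => c m * (Real.cos t^(2*m) * Real.sin t ^ (2*v)) := by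
    intro m; funext t; rw [hF, hc]; simp only [mul_pow]; ring
  have hFi : ∀ m, Integrable (F m) (volume.restrict (Set.Ioo 0 (π/2))) := by
    intro m; rw [hFeq m]; exact ((key_int hv m).1.const_mul _)
  have habs : ∀ m, |c m| = |z|^(2*m) / (2*m).factorial := by
    intro m
    rw [hc, abs_div, abs_mul, abs_pow, abs_pow, abs_neg, abs_one, one_pow, one_mul,
      Nat.abs_cast]
  have hC0 : (0:ℝ) ≤ ∫ t in Set.Ioo 0 (π/2), Real.sin t ^ (2*v) := by
    refine setIntegral_nonneg measurableSet_Ioo fun t ht => ?_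
    rcases le_or_gt 0 (Real.sin t) with h | h
    · exact Real.rpow_nonneg h _
    · exact absurd (sin_mem_Ioo ht).1 (by linarith)
  have hmono : ∀ m, ∫ t in Set.Ioo 0 (π/2), Real.cos t^(2*m) * Real.sin t ^ (2*v)
      ≤ ∫ t in Set.Ioo 0 (π/2), Real.sin t ^ (2*v) := by
    intro m
    have h0 := (key_int hv 0).1
    simp only [Nat.mul_zero, pow_zero, one_mul] at h0
    refine setIntegral_mono_on (key_int hv m).1 h0 measurableSet_Ioo fun t ht => ?_
    obtain ⟨hs, _, hcc⟩ := sin_mem_Ioo ht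
    exact mul_le_of_le_one_left (Real.rpow_nonneg hs.le _)
      (pow_le_one₀ hcc.le (Real.cos_le_one t))
  have hnorm : ∀ m, ∫ t in Set.Ioo 0 (π/2), ‖F m t‖
      ≤ |c m| * ∫ t in Set.Ioo 0 (π/2), Real.sin t ^ (2*v) := by
    intro m
    have h1 : ∫ t in Set.Ioo 0 (π/2), ‖F m t‖
        = |c m| * ∫ t in Set.Ioo 0 (π/2), Real.cos t^(2*m) * Real.sin t ^ (2*v) := by
      rw [← integral_const_mul]
      refine setIntegral_congr_fun measurableSet_Ioo fun t ht => ?_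
      obtain ⟨hs, _, hcc⟩ := sin_mem_Ioo ht
      rw [hFeq m]
      simp only [Real.norm_eq_abs, abs_mul]
      rw [abs_of_nonneg (by positivity : (0:ℝ) ≤ Real.cos t^(2*m)),
          abs_of_nonneg (Real.rpow_nonneg hs.le _)]
    rw [h1]
    exact mul_le_mul_of_nonneg_left (hmono m) (abs_nonneg _)
  have hsummable : Summable fun m => ∫ t in Set.Ioo 0 (π/2), ‖F m t‖ := by
    have hs1 : Summable fun m : ℕ => |z|^(2*m) / (2*m).factorial :=
      (Real.summable_pow_div_factorial |z|).comp_injective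
        (fun a b h => by simp only at h; omega : Function.Injective (fun m : ℕ => 2*m))
    refine Summable.of_nonneg_of_le (fun m => ?_) (fun m => ?_)
      (hs1.mul_right (∫ t in Set.Ioo 0 (π/2), Real.sin t ^ (2*v)))
    · exact setIntegral_nonneg measurableSet_Ioo fun t ht => norm_nonneg _
    · calc _ ≤ _ := hnorm m
        _ = _ := by rw [habs m]
  have hswap := MeasureTheory.hasSum_integral_of_summable_integral_norm hFi hsummable
  have hpt : (fun t => ∑' m, F m t)
      = fun t => Real.cos (z * Real.cos t) * Real.sin t ^ (2*v) := by
    funext t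
    exact ((Real.hasSum_cos (z * Real.cos t)).mul_right _).tsum_eq
  rw [hpt] at hswap
  have hIm : ∀ m, ∫ t in Set.Ioo 0 (π/2), F m t
      = c m * (Real.Gamma (v+1/2) * Real.Gamma ((m:ℝ)+1/2) / (2 * Real.Gamma (v + (m:ℝ) + 1))) := by
    intro m
    rw [hFeq m, integral_const_mul, (key_int hv m).2]
  have hint_eq : (∫ t in Set.Ioo 0 (π/2), Real.cos (z * Real.cos t) * Real.sin t ^ (2*v))
      = ∑' m : ℕ, c m * (Real.Gamma (v+1/2) * Real.Gamma ((m:ℝ)+1/2)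
          / (2 * Real.Gamma (v + (m:ℝ) + 1))) := by
    rw [← hswap.tsum_eq]
    exact tsum_congr fun m => hIm m
  rw [hint_eq, besselJ, ← tsum_mul_left, ← tsum_mul_left]
  refine tsum_congr fun m => ?_
  rw [rpow_split (z/2) m hv, gammaHalf m]
  have e1 : Real.Gamma (1/2 + v) = Real.Gamma (v + 1/2) := by rw [add_comm]
  have e2 : Real.Gamma ((m:ℝ) + v + 1) = Real.Gamma (v + (m:ℝ) + 1) := by ring_nf
  have e3 : Real.pi ^ (-(1/2:ℝ)) = (Real.sqrt π)⁻¹ := by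
    rw [Real.rpow_neg Real.pi_pos.le, ← Real.sqrt_eq_rpow]
  have e4 : ((z/2)^(2*m) : ℝ) = z^(2*m) / 4^m := by
    rw [div_pow]
    congr 1
    rw [show (4:ℝ) = 2^2 by norm_num, ← pow_mul]
  rw [e1, e2, e3, e4, hc]
  have h1 : Real.sqrt π ≠ 0 := by positivity
  have h2 : Real.Gamma (v + (m:ℝ) + 1) ≠ 0 :=
    (Real.Gamma_pos_of_pos (by have : (0:ℝ) ≤ m := Nat.cast_nonneg m; linarith)).ne'
  have h3 : ((m).factorial : ℝ) ≠ 0 := by positivity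
  have h4 : (((2*m)).factorial : ℝ) ≠ 0 := by positivity
  have h5 : ((4:ℝ)^m) ≠ 0 := by positivity
  field_simp

end
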